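/- Let m, n ≥ 1 and A : Fin m → Fin n → ℝ be an arbitrary payoff matrix. The mixed extension of the finite two-player zero-sum game with matrix A, namely the zero-sum game (X,Y,g) with X = stdSimplex ℝ (Fin m), Y = stdSimplex ℝ (Fin n) and g(p,q) = Σ_{a,b} p_a q_b A a b, is feasible. -/

import Mathlib

open Finset

namespace MF

variable {m n : ℕ}

lemma g_col (p : Fin m → ℝ) (q : Fin n → ℝ) (A : Fin m → Fin n → ℝ) :
    ∑ a : Fin m, ∑ b : Fin n, p a * q b * A a b = ∑ b : Fin n, q b * ∑ a : Fin m, p a * A a b := by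
  rw [Finset.sum_comm]
  refine Finset.sum_congr rfl fun b _ => ?_
  rw [Finset.mul_sum]
  exact Finset.sum_congr rfl fun a _ => by ring

lemma g_row (p : Fin m → ℝ) (q : Fin n → ℝ) (A : Fin m → Fin n → ℝ) :
    ∑ a : Fin m, ∑ b : Fin n, p a * q b * A a b = ∑ a : Fin m, p a * ∑ b : Fin n, q b * A a b := by
  refine Finset.sum_congr rfl fun a _ => ?_
  rw [Finset.mul_sum]
  exact Finset.sum_congr rfl fun b _ => by ring

lemma le_comb {k : ℕ} {q : Fin k → ℝ} (hq : q ∈ stdSimplex ℝ (Fin k)) {c : Fin k → ℝ} {v : ℝ}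
    (h : ∀ b, v ≤ c b) : v ≤ ∑ b, q b * c b := by
  have : ∑ b, q b * v ≤ ∑ b, q b * c b :=
    Finset.sum_le_sum fun b _ => mul_le_mul_of_nonneg_left (h b) (hq.1 b)
  calc v = (∑ b, q b) * v := by rw [hq.2, one_mul]
  _ = ∑ b, q b * v := by rw [Finset.sum_mul]
  _ ≤ ∑ b, q b * c b := this

lemma comb_le {k : ℕ} {q : Fin k → ℝ} (hq : q ∈ stdSimplex ℝ (Fin k)) {c : Fin k → ℝ} {v : ℝ}
    (h : ∀ b, c b ≤ v) : ∑ b, q b * c b ≤ v := by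
  have h' : ∀ b, -v ≤ -c b := fun b => neg_le_neg (h b)
  have := le_comb hq h'
  simp only [mul_neg, Finset.sum_neg_distrib] at this
  linarith

lemma sum_pure {k : ℕ} (b : Fin k) (c : Fin k → ℝ) :
    ∑ j, (if b = j then (1:ℝ) else 0) * c j = c b := by
  simp [ite_mul, Finset.sum_ite_eq]


lemma alternative {m n : ℕ} (hm : 0 < m) (hn : 0 < n) (B : Fin m → Fin n → ℝ) :
    (∃ q ∈ stdSimplex ℝ (Fin n), ∀ a, ∑ b, q b * B a b ≤ 0) ∨
    (∃ p ∈ stdSimplex ℝ (Fin m), ∀ b, 0 < ∑ a, p a * B a b) := by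
  classical
  set L : (Fin n → ℝ) →ₗ[ℝ] (Fin m → ℝ) :=
    { toFun := fun q a => ∑ b, q b * B a b
      map_add' := by
        intro x y; funext a
        simp [add_mul, Finset.sum_add_distrib]
      map_smul' := by
        intro c x; funext a
        simp [Finset.mul_sum, mul_assoc] } with hL
  set S : Set (Fin m → ℝ) := L '' stdSimplex ℝ (Fin n) with hS
  set T : Set (Fin m → ℝ) := {x | ∀ a, x a ≤ 0} with hT
  by_cases hST : (S ∩ T).Nonempty
  · obtain ⟨z, ⟨q, hq, rfl⟩, hzT⟩ := hST
    exact Or.inl ⟨q, hq, fun a => hzT a⟩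
  · right
    have hdisj : Disjoint S T := Set.disjoint_iff_inter_eq_empty.2
      (Set.not_nonempty_iff_eq_empty.1 hST)
    have hSv : Convex ℝ S := (convex_stdSimplex ℝ (Fin n)).linear_image L
    have hSc : IsCompact S :=
      (isCompact_stdSimplex ℝ (Fin n)).image L.continuous_of_finiteDimensional
    have hTv : Convex ℝ T := by
      intro x hx y hy s t hs ht hst
      intro a
      have h1 := hx a; have h2 := hy a
      have : s * x a + t * y a ≤ 0 := by nlinarith
      simpa using this
    have hTc : IsClosed T := by
      have : T = ⋂ a, {x : Fin m → ℝ | x a ≤ 0} := by ext x; simp [hT]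
      rw [this]
      exact isClosed_iInter fun a => isClosed_le (continuous_apply a) continuous_const
    obtain ⟨f, u, v, hfS, huv, hfT⟩ :=
      geometric_hahn_banach_compact_closed hSv hSc hTv hTc hdisj
    -- 0 ∈ T so v < 0
    have h0T : (0 : Fin m → ℝ) ∈ T := fun a => le_refl 0
    have hv0 : v < 0 := by have := hfT 0 h0T; simpa using this
    -- basis vectors
    set e : Fin m → (Fin m → ℝ) := fun a j => if a = j then (1:ℝ) else 0 with he
    have hfe_nonpos : ∀ a, f (e a) ≤ 0 := by
      intro a
      by_contra h
      push_neg at h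
      set c : ℝ := (1 - v) / f (e a) with hc
      have hmem : (-c) • e a ∈ T := by
        intro j
        simp only [Pi.smul_apply, smul_eq_mul, he]
        have hcpos : 0 < c := div_pos (by linarith) h
        by_cases hj : a = j
        · simp [hj]; linarith
        · simp [hj]
      have := hfT _ hmem
      rw [map_smul] at this
      have hfc : f (e a) ≠ 0 := ne_of_gt h
      have : v < -((1 - v) / f (e a)) * f (e a) := by simpa using this
      rw [neg_mul, div_mul_cancel₀ _ hfc] at this
      linarith
    -- f z = ∑ a, z a * f (e a)
    have hfz : ∀ z : Fin m → ℝ, f z = ∑ a, z a * f (e a) := by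
      intro z
      conv_lhs => rw [pi_eq_sum_univ z]
      rw [map_sum]
      exact Finset.sum_congr rfl fun a _ => by rw [map_smul]; simp [he]
    -- for each column b: ∑ a, B a b * f (e a) < u
    have hcol : ∀ b : Fin n, ∑ a, B a b * f (e a) < u := by
      intro b
      have hmem : L (fun j => if b = j then (1:ℝ) else 0) ∈ S :=
        ⟨_, ite_eq_mem_stdSimplex ℝ b, rfl⟩
      have := hfS _ hmem
      rw [hfz] at this
      have hLval : ∀ a, (L (fun j => if b = j then (1:ℝ) else 0)) a = B a b := by
        intro a; simp [hL, ite_mul, Finset.sum_ite_eq]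
      calc ∑ a, B a b * f (e a) = ∑ a, (L (fun j => if b = j then (1:ℝ) else 0)) a * f (e a) :=
            Finset.sum_congr rfl fun a _ => by rw [hLval a]
      _ < u := this
    set p' : Fin m → ℝ := fun a => -f (e a) with hp'
    have hp'nonneg : ∀ a, 0 ≤ p' a := fun a => by simpa [hp'] using hfe_nonpos a
    have hcol' : ∀ b : Fin n, 0 < ∑ a, p' a * B a b := by
      intro b
      have := hcol b
      have h2 : ∑ a, p' a * B a b = -∑ a, B a b * f (e a) := by
        rw [← Finset.sum_neg_distrib]
        exact Finset.sum_congr rfl fun a _ => by simp [hp']; ring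
      rw [h2]
      have : u < 0 := lt_trans huv hv0
      linarith [hcol b]
    set σ : ℝ := ∑ a, p' a with hσ
    have hσpos : 0 < σ := by
      by_contra h
      push_neg at h
      have hσ0 : σ = 0 := le_antisymm h (Finset.sum_nonneg fun a _ => hp'nonneg a)
      have hall : ∀ a ∈ Finset.univ, p' a = 0 :=
        (Finset.sum_eq_zero_iff_of_nonneg fun a _ => hp'nonneg a).1 hσ0
      have := hcol' ⟨0, hn⟩
      rw [Finset.sum_congr rfl fun a ha => by rw [hall a ha, zero_mul]] at this
      simp at this
    refine ⟨fun a => p' a / σ, ⟨fun a => div_nonneg (hp'nonneg a) hσpos.le, ?_⟩, ?_⟩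
    · rw [← Finset.sum_div, ← hσ, div_self hσpos.ne']
    · intro b
      have : ∑ a, p' a / σ * B a b = (∑ a, p' a * B a b) / σ := by
        rw [Finset.sum_div]
        exact Finset.sum_congr rfl fun a _ => by ring
      rw [this]
      exact div_pos (hcol' b) hσpos

lemma exists_saddle {m n : ℕ} (hm : 0 < m) (hn : 0 < n) (A : Fin m → Fin n → ℝ) :
    ∃ p ∈ stdSimplex ℝ (Fin m), ∃ q ∈ stdSimplex ℝ (Fin n), ∃ v : ℝ,
      (∀ b, v ≤ ∑ a, p a * A a b) ∧ (∀ a, ∑ b, q b * A a b ≤ v) := by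
  classical
  have hne : (Finset.univ : Finset (Fin n)).Nonempty := ⟨⟨0, hn⟩, Finset.mem_univ _⟩
  set Φ : (Fin m → ℝ) → ℝ :=
    fun p => Finset.univ.inf' hne (fun b => ∑ a, p a * A a b) with hΦ
  have hΦc : Continuous Φ := by
    apply Continuous.finset_inf'_apply hne
    intro b _
    exact continuous_finset_sum _ fun a _ => (continuous_apply a).mul continuous_const
  have hXne : (stdSimplex ℝ (Fin m)).Nonempty := ⟨_, ite_eq_mem_stdSimplex ℝ ⟨0, hm⟩⟩
  obtain ⟨p, hpX, hpmax⟩ :=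
    (isCompact_stdSimplex ℝ (Fin m)).exists_isMaxOn hXne hΦc.continuousOn
  set v : ℝ := Φ p with hv
  have h1 : ∀ b, v ≤ ∑ a, p a * A a b := fun b => Finset.inf'_le _ (Finset.mem_univ b)
  rcases alternative hm hn (fun a b => A a b - v) with ⟨q, hqY, hq⟩ | ⟨p₂, hp₂X, hp₂⟩
  · refine ⟨p, hpX, q, hqY, v, h1, fun a => ?_⟩
    have h := hq a
    have hexp : ∑ b, q b * (A a b - v) = (∑ b, q b * A a b) - (∑ b, q b) * v := by
      rw [Finset.sum_mul, ← Finset.sum_sub_distrib]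
      exact Finset.sum_congr rfl fun b _ => by ring
    rw [hexp, hqY.2, one_mul] at h
    linarith
  · exfalso
    have hgt : v < Φ p₂ := by
      rw [hΦ, Finset.lt_inf'_iff]
      intro b _
      have h := hp₂ b
      have hexp : ∑ a, p₂ a * (A a b - v) = (∑ a, p₂ a * A a b) - (∑ a, p₂ a) * v := by
        rw [Finset.sum_mul, ← Finset.sum_sub_distrib]
        exact Finset.sum_congr rfl fun a _ => by ring
      rw [hexp, hp₂X.2, one_mul] at h
      linarith
    exact absurd (hpmax hp₂X) (not_le.2 hgt)

end MF

/-- A two-player game over strategy sets `X ⊆ E`, `Y ⊆ F` with payoffs `U, V` is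
feasible: for every pair of outside options admitting a feasible contract, there
exists a constrained Nash equilibrium. -/
def FeasibleOn {E F : Type*} (X : Set E) (Y : Set F) (U V : E → F → ℝ) : Prop :=
  ∀ u0 v0 : ℝ, (∃ x ∈ X, ∃ y ∈ Y, u0 ≤ U x y ∧ v0 ≤ V x y) →
    ∃ x' ∈ X, ∃ y' ∈ Y, u0 ≤ U x' y' ∧ v0 ≤ V x' y' ∧
      (∀ x ∈ X, U x' y' < U x y' → V x y' < v0) ∧
      (∀ y ∈ Y, V x' y' < V x' y → U x' y < u0)

theorem matrix_mixed_extension_feasible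
    (m n : ℕ) (hm : 1 ≤ m) (hn : 1 ≤ n) (A : Fin m → Fin n → ℝ) :
    FeasibleOn (stdSimplex ℝ (Fin m)) (stdSimplex ℝ (Fin n))
      (fun p q => ∑ a : Fin m, ∑ b : Fin n, p a * q b * A a b)
      (fun p q => -∑ a : Fin m, ∑ b : Fin n, p a * q b * A a b) := by
  classical
  intro u0 v0 hfe
  obtain ⟨xb, hxb, yb, hyb, hU, hV⟩ := hfe
  simp only at hU hV ⊢
  have hub : ∑ a : Fin m, ∑ b : Fin n, xb a * yb b * A a b ≤ -v0 := by linarith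
  obtain ⟨p, hpX, q, hqY, v, hp, hq⟩ := MF.exists_saddle hm hn A
  have hvle : ∀ y ∈ stdSimplex ℝ (Fin n), v ≤ ∑ a : Fin m, ∑ b : Fin n, p a * y b * A a b := by
    intro y hy; rw [MF.g_col]; exact MF.le_comb hy hp
  have hle : ∀ x ∈ stdSimplex ℝ (Fin m), ∑ a : Fin m, ∑ b : Fin n, x a * q b * A a b ≤ v := by
    intro x hx; rw [MF.g_row]
    exact MF.comb_le hx hq
  by_cases hv1 : v ≤ -v0
  · by_cases hv2 : u0 ≤ v
    · -- Type 1 : the saddle point itself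
      refine ⟨p, hpX, q, hqY, le_trans hv2 (hvle q hqY), ?_, ?_, ?_⟩
      · have := hle p hpX; linarith
      · intro x hx hlt; exfalso
        have h1 := hle x hx; have h2 := hvle q hqY; linarith
      · intro y hy hlt; exfalso
        have h1 := hvle y hy; have h2 := hle p hpX; simp only [neg_lt_neg_iff] at hlt; linarith
    · -- v < u0 : Type 3, column side
      push_neg at hv2
      have hnem : (Finset.univ : Finset (Fin m)).Nonempty := ⟨⟨0, hm⟩, Finset.mem_univ _⟩
      set χ : ℝ → ℝ := fun t =>
        Finset.univ.sup' hnem (fun a => ∑ b, ((1-t) * yb b + t * q b) * A a b) with hχ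
      have hχc : Continuous χ :=
        Continuous.finset_sup'_apply hnem fun a _ =>
          continuous_finset_sum _ fun b _ => by fun_prop
      have hχ0 : u0 ≤ χ 0 := by
        have h1 : ∑ a : Fin m, ∑ b : Fin n, xb a * yb b * A a b ≤ χ 0 := by
          rw [MF.g_row]
          refine MF.comb_le hxb fun a => ?_
          calc ∑ b, yb b * A a b = ∑ b, ((1-(0:ℝ)) * yb b + 0 * q b) * A a b :=
                Finset.sum_congr rfl fun b _ => by ring
          _ ≤ χ 0 := Finset.le_sup'
                (fun a => ∑ b, ((1-(0:ℝ)) * yb b + 0 * q b) * A a b) (Finset.mem_univ a)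
        linarith
      have hχ1 : χ 1 ≤ u0 := by
        have : χ 1 ≤ v := by
          refine Finset.sup'_le _ _ fun a _ => ?_
          calc ∑ b, ((1-(1:ℝ)) * yb b + 1 * q b) * A a b = ∑ b, q b * A a b :=
                Finset.sum_congr rfl fun b _ => by ring
          _ ≤ v := hq a
        linarith
      obtain ⟨t, htI, hχt⟩ := intermediate_value_Icc' zero_le_one hχc.continuousOn ⟨hχ1, hχ0⟩
      set y' : Fin n → ℝ := fun b => (1-t) * yb b + t * q b with hy'
      have hy'Y : y' ∈ stdSimplex ℝ (Fin n) := by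
        have h2 := (convex_stdSimplex ℝ (Fin n)) hyb hqY
          (by linarith [htI.2] : (0:ℝ) ≤ 1-t) htI.1 (by ring)
        have he : y' = (1-t) • yb + t • q := by funext b; simp [hy']
        rw [he]; exact h2
      obtain ⟨a0, _, ha0⟩ := Finset.exists_mem_eq_sup' hnem (fun a => ∑ b, y' b * A a b)
      set x' : Fin m → ℝ := fun j => if a0 = j then (1:ℝ) else 0 with hx'
      have hx'X : x' ∈ stdSimplex ℝ (Fin m) := ite_eq_mem_stdSimplex ℝ a0
      have hcolv : ∑ b, y' b * A a0 b = u0 := by rw [← ha0]; exact hχt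
      have hval : ∑ a : Fin m, ∑ b : Fin n, x' a * y' b * A a b = u0 := by
        rw [MF.g_row]
        rw [MF.sum_pure a0 (fun a => ∑ b, y' b * A a b)]
        exact hcolv
      have hhigh : ∀ x ∈ stdSimplex ℝ (Fin m),
          ∑ a : Fin m, ∑ b : Fin n, x a * y' b * A a b ≤ u0 := by
        intro x hx
        rw [MF.g_row]
        refine MF.comb_le hx fun a => ?_
        calc ∑ b, y' b * A a b ≤ Finset.univ.sup' hnem (fun a => ∑ b, y' b * A a b) :=
              Finset.le_sup' (fun a => ∑ b, y' b * A a b) (Finset.mem_univ a)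
        _ = u0 := hχt
      refine ⟨x', hx'X, y', hy'Y, by rw [hval], ?_, ?_, ?_⟩
      · rw [hval]; linarith
      · intro x hx hlt; exfalso
        rw [hval] at hlt
        have := hhigh x hx; linarith
      · intro y hy hlt
        rw [hval] at hlt
        linarith
  · -- -v0 < v : Type 2, row side
    push_neg at hv1
    have hnen : (Finset.univ : Finset (Fin n)).Nonempty := ⟨⟨0, hn⟩, Finset.mem_univ _⟩
    set ψ : ℝ → ℝ := fun t =>
      Finset.univ.inf' hnen (fun b => ∑ a, ((1-t) * xb a + t * p a) * A a b) with hψ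
    have hψc : Continuous ψ :=
      Continuous.finset_inf'_apply hnen fun b _ =>
        continuous_finset_sum _ fun a _ => by fun_prop
    have hψ0 : ψ 0 ≤ -v0 := by
      have h1 : ψ 0 ≤ ∑ a : Fin m, ∑ b : Fin n, xb a * yb b * A a b := by
        rw [MF.g_col]
        refine MF.le_comb hyb fun b => ?_
        calc ψ 0 ≤ ∑ a, ((1-(0:ℝ)) * xb a + 0 * p a) * A a b :=
              Finset.inf'_le _ (Finset.mem_univ b)
        _ = ∑ a, xb a * A a b := Finset.sum_congr rfl fun a _ => by ring
      linarith
    have hψ1 : -v0 ≤ ψ 1 := by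
      have : v ≤ ψ 1 := by
        refine Finset.le_inf' _ _ fun b _ => ?_
        calc v ≤ ∑ a, p a * A a b := hp b
        _ = ∑ a, ((1-(1:ℝ)) * xb a + 1 * p a) * A a b :=
              Finset.sum_congr rfl fun a _ => by ring
      linarith
    obtain ⟨t, htI, hψt⟩ := intermediate_value_Icc zero_le_one hψc.continuousOn ⟨hψ0, hψ1⟩
    set x' : Fin m → ℝ := fun a => (1-t) * xb a + t * p a with hx'
    have hx'X : x' ∈ stdSimplex ℝ (Fin m) := by
      have h2 := (convex_stdSimplex ℝ (Fin m)) hxb hpX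
        (by linarith [htI.2] : (0:ℝ) ≤ 1-t) htI.1 (by ring)
      have he : x' = (1-t) • xb + t • p := by funext a; simp [hx']
      rw [he]; exact h2
    obtain ⟨b0, _, hb0⟩ := Finset.exists_mem_eq_inf' hnen (fun b => ∑ a, x' a * A a b)
    set y' : Fin n → ℝ := fun j => if b0 = j then (1:ℝ) else 0 with hy'
    have hy'Y : y' ∈ stdSimplex ℝ (Fin n) := ite_eq_mem_stdSimplex ℝ b0
    have hrowv : ∑ a, x' a * A a b0 = -v0 := by rw [← hb0]; exact hψt
    have hval : ∑ a : Fin m, ∑ b : Fin n, x' a * y' b * A a b = -v0 := by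
      rw [MF.g_col]
      rw [MF.sum_pure b0 (fun b => ∑ a, x' a * A a b)]
      exact hrowv
    have hlow : ∀ y ∈ stdSimplex ℝ (Fin n),
        -v0 ≤ ∑ a : Fin m, ∑ b : Fin n, x' a * y b * A a b := by
      intro y hy
      rw [MF.g_col]
      refine MF.le_comb hy fun b => ?_
      calc -v0 = Finset.univ.inf' hnen (fun b => ∑ a, x' a * A a b) := hψt.symm
      _ ≤ ∑ a, x' a * A a b := Finset.inf'_le _ (Finset.mem_univ b)
    refine ⟨x', hx'X, y', hy'Y, ?_, ?_, ?_, ?_⟩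
    · rw [hval]; linarith
    · rw [hval]; linarith
    · intro x hx hlt
      rw [hval] at hlt
      linarith
    · intro y hy hlt; exfalso
      rw [hval] at hlt
      have := hlow y hy; linarith
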